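/- Let A^∞ be generated from A = a_1...a_n (with a_1 = 1 and w(A) = k+p+1) by the symmetric shift register with parameters k, p, n. If r > 0 is a period of A^∞ (i.e., a_{r+i} = a_i for all i ≥ 1), then a_r = 0, a_{r+1} = 1, and w(a_{r+1}...a_{r+n}) = k+p+1. -/

import Mathlib

open Finset

/-- If `r > 0` is a period of `A^∞` (generated from `A` with `a_1 = 1`,
`w(A) = k+p+1`), then `a_r = 0`, `a_{r+1} = 1` and `w(a_{r+1}...a_{r+n}) = k+p+1`. -/
theorem shiftRegister_period_props (n k p : ℕ) (hn : k + p < n)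
    (a : ℕ → ℕ) (hbit : ∀ i, a i ≤ 1)
    (hgen : ∀ j : ℕ, a (n + j + 1) =
      if k ≤ (∑ i ∈ Finset.Icc (j + 2) (j + n), a i) ∧
          (∑ i ∈ Finset.Icc (j + 2) (j + n), a i) ≤ k + p
        then 1 - a (j + 1) else a (j + 1))
    (ha1 : a 1 = 1)
    (hwA : (∑ i ∈ Finset.Icc 1 n, a i) = k + p + 1)
    (r : ℕ) (hr : 0 < r)
    (hper : ∀ i, 1 ≤ i → a (r + i) = a i) :
    a r = 0 ∧ a (r + 1) = 1 ∧ (∑ i ∈ Finset.Icc (r + 1) (r + n), a i) = k + p + 1 := by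
  have hn1 : 1 ≤ n := by omega
  set W : ℕ → ℕ := fun j => ∑ i ∈ Icc (j+1) (j+n), a i with hW
  have hsplitL : ∀ j, W j = a (j+1) + ∑ i ∈ Icc (j+2) (j+n), a i := by
    intro j
    rw [hW]; simp only
    rw [Finset.Icc_eq_cons_Ioc (by omega), Finset.sum_cons, ← Finset.Icc_add_one_left_eq_Ioc]
    rfl
  have hsplitR : ∀ j, W (j+1) = (∑ i ∈ Icc (j+2) (j+n), a i) + a (n+j+1) := by
    intro j
    rw [hW]; simp only
    have h1 : j+1+n = (j+n)+1 := by omega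
    rw [h1, Finset.sum_Icc_succ_top (by omega)]
    congr 2
    omega
  have hinv : ∀ j, k ≤ W j ∧ W j ≤ k + p + 1 := by
    intro j
    induction j with
    | zero =>
      have : W 0 = k + p + 1 := by rw [hW]; simpa using hwA
      omega
    | succ j ih =>
      have hL := hsplitL j
      have hR := hsplitR j
      have hg := hgen j
      have hb1 := hbit (j+1)
      have hb2 := hbit (n+j+1)
      by_cases hc : k ≤ (∑ i ∈ Finset.Icc (j + 2) (j + n), a i) ∧
          (∑ i ∈ Finset.Icc (j + 2) (j + n), a i) ≤ k + p
      · rw [if_pos hc] at hg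
        omega
      · rw [if_neg hc] at hg
        omega
  have hper1 : a (r+1) = 1 := by rw [hper 1 le_rfl, ha1]
  have hWr : W r = k + p + 1 := by
    rw [hW]; simp only
    rw [show Icc (r+1) (r+n) = Finset.map (addLeftEmbedding r) (Icc 1 n) by
      rw [Finset.map_add_left_Icc]]
    rw [Finset.sum_map, ← hwA]
    refine Finset.sum_congr rfl fun i hi => ?_
    simpa using hper i (Finset.mem_Icc.mp hi).1
  refine ⟨?_, hper1, hWr⟩
  by_contra har
  have har1 : a r = 1 := by have := hbit r; omega
  obtain ⟨m, rfl⟩ : ∃ m, r = m + 1 := ⟨r - 1, by omega⟩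
  have hL := hsplitL m
  have hR := hsplitR m
  have hinv' := hinv m
  have hb := hbit (n+m+1)
  have hS : (∑ i ∈ Icc (m+2) (m+n), a i) = k + p := by omega
  have hg := hgen m
  rw [if_pos ⟨by omega, by omega⟩] at hg
  omega
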